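/- Let k be a field of characteristic 2 and let A = k[[x, y, z]]/(xy + z²), a local ring with maximal ideal 𝔪 generated by the images x̄, ȳ, z̄ of x, y, z. Suppose D₁ and D₂ are k-derivations of A with D₁(x̄) = x̄, D₁(ȳ) = ȳ, D₁(z̄) = 0 and D₂(x̄) = 0, D₂(ȳ) = 0, D₂(z̄) = 1, and suppose D₁, D₂ are linearly independent over A (i.e. a·D₁ + b·D₂ = 0 with a, b ∈ A implies a = b = 0). If f, g ∈ A with f a unit and g ∈ 𝔪, then the derivation ξ = f·D₁ + g·D₂ satisfies ξ∘ξ ≠ 0. -/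

import Mathlib

open MvPowerSeries

noncomputable section

/-- The complete local ring `A = k[[x, y, z]]/(xy + z²)` of an `A₁` rational double point. -/
def A1Ring (k : Type*) [Field k] : Type _ :=
  MvPowerSeries (Fin 3) k ⧸
    (Ideal.span {(X 0 : MvPowerSeries (Fin 3) k) * X 1 + X 2 ^ 2})

instance (k : Type*) [Field k] : CommRing (A1Ring k) := Ideal.Quotient.commRing _
instance (k : Type*) [Field k] : Algebra k (A1Ring k) := Ideal.Quotient.algebra k

/-- The image `x̄` of `x` in `A = k[[x, y, z]]/(xy + z²)`. -/
def A1x (k : Type*) [Field k] : A1Ring k := Ideal.Quotient.mk _ (X 0)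

/-- The image `ȳ` of `y` in `A = k[[x, y, z]]/(xy + z²)`. -/
def A1y (k : Type*) [Field k] : A1Ring k := Ideal.Quotient.mk _ (X 1)

/-- The image `z̄` of `z` in `A = k[[x, y, z]]/(xy + z²)`. -/
def A1z (k : Type*) [Field k] : A1Ring k := Ideal.Quotient.mk _ (X 2)

namespace A1Aux

variable {k : Type*} [Field k]

lemma coeffXmul (i : Fin 3) (P : MvPowerSeries (Fin 3) k) (m : Fin 3 →₀ ℕ) :
    (coeff (R := k) m) (X i * P) =
      if Finsupp.single i 1 ≤ m then coeff (R := k) (m - Finsupp.single i 1) P else 0 := by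
  rw [X_def, coeff_monomial_mul]; simp

lemma nsl {i : Fin 3} {m : Fin 3 →₀ ℕ} (h : m i = 0) : ¬ Finsupp.single i 1 ≤ m :=
  fun hc => by have := Finsupp.single_le_iff.mp hc; omega

lemma Xne : (X 0 : MvPowerSeries (Fin 3) k) ≠ 0 := fun h => by
  have h1 : (1 : k) = 0 := by
    simpa [X_def, coeff_monomial_same] using congrArg (coeff (R := k) (Finsupp.single 0 1)) h
  exact one_ne_zero h1

/-- Every power series in three variables decomposes as constant plus `X`-multiples. -/
lemma decomp (F : MvPowerSeries (Fin 3) k) :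
    ∃ (c : k) (P Q R : MvPowerSeries (Fin 3) k),
      F = C (σ := Fin 3) (R := k) c + X 0 * P + X 1 * Q + X 2 * R := by
  classical
  refine ⟨constantCoeff (σ := Fin 3) (R := k) F,
    @id (MvPowerSeries (Fin 3) k) fun n => coeff (R := k) (n + Finsupp.single 0 1) F,
    @id (MvPowerSeries (Fin 3) k) fun n => if n 0 = 0 then coeff (R := k) (n + Finsupp.single 1 1) F else 0,
    @id (MvPowerSeries (Fin 3) k)
      fun n => if n 0 = 0 ∧ n 1 = 0 then coeff (R := k) (n + Finsupp.single 2 1) F else 0, ?_⟩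
  refine MvPowerSeries.ext fun m => ?_
  simp only [map_add, coeffXmul, coeff_C]
  simp only [coeff_apply]
  simp only [id]
  by_cases h0 : m 0 = 0
  · by_cases h1 : m 1 = 0
    · by_cases h2 : m 2 = 0
      · have hm : m = 0 := by ext i; fin_cases i <;> simpa
        subst hm
        simp [nsl (by simp : ((0 : Fin 3 →₀ ℕ)) 0 = 0), nsl (by simp : ((0 : Fin 3 →₀ ℕ)) 1 = 0),
          nsl (by simp : ((0 : Fin 3 →₀ ℕ)) 2 = 0)]
        rfl
      · have hle : Finsupp.single (2:Fin 3) 1 ≤ m :=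
          Finsupp.single_le_iff.mpr (Nat.one_le_iff_ne_zero.mpr h2)
        have hm0 : m ≠ 0 := fun h => h2 (by simp [h])
        simp [nsl h0, nsl h1, hle, hm0, h0, h1, tsub_add_cancel_of_le hle]
    · have hle : Finsupp.single (1:Fin 3) 1 ≤ m :=
        Finsupp.single_le_iff.mpr (Nat.one_le_iff_ne_zero.mpr h1)
      have hm0 : m ≠ 0 := fun h => h1 (by simp [h])
      simp [nsl h0, hle, hm0, h0, h1, tsub_add_cancel_of_le hle]
  · have hle : Finsupp.single (0:Fin 3) 1 ≤ m :=
      Finsupp.single_le_iff.mpr (Nat.one_le_iff_ne_zero.mpr h0)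
    have hm0 : m ≠ 0 := fun h => h0 (by simp [h])
    simp [hle, hm0, h0, tsub_add_cancel_of_le hle]

/-- `X 0` is a nonzerodivisor modulo `(X 0 * X 1 + X 2 ^ 2)`. -/
lemma xreg_ps (U Q : MvPowerSeries (Fin 3) k)
    (h : U * X 0 = Q * (X 0 * X 1 + X 2 ^ 2)) :
    ∃ Q₁, U = Q₁ * (X 0 * X 1 + X 2 ^ 2) := by
  classical
  have hX01 : (X 0 : MvPowerSeries (Fin 3) k) * X 1 =
      monomial (R := k) (Finsupp.single 0 1 + Finsupp.single 1 1) 1 := by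
    rw [X_def, X_def, monomial_mul_monomial, one_mul]
  have hX22 : (X 2 : MvPowerSeries (Fin 3) k) ^ 2 = monomial (R := k) (Finsupp.single 2 2) 1 :=
    X_pow_eq 2 2
  have hQ0 : ∀ n : Fin 3 →₀ ℕ, n 0 = 0 → coeff (R := k) n Q = 0 := by
    intro n hn
    have m0 : (n + Finsupp.single (2:Fin 3) 2 : Fin 3 →₀ ℕ) 0 = 0 := by
      simp [hn, Finsupp.single_apply]
    have hc := congrArg (coeff (R := k) (n + Finsupp.single 2 2)) h
    rw [mul_add, map_add, hX01, hX22, coeff_add_mul_monomial] at hc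
    rw [X_def, coeff_mul_monomial, if_neg (fun hcon => by
      have := Finsupp.le_def.mp hcon 0; simp [m0, Finsupp.single_apply] at this)] at hc
    rw [coeff_mul_monomial, if_neg (fun hcon => by
      have := Finsupp.le_def.mp hcon 0; simp [m0, Finsupp.single_apply] at this)] at hc
    simpa using hc.symm
  set Q₁ : MvPowerSeries (Fin 3) k := fun n => coeff (R := k) (n + Finsupp.single 0 1) Q with hQ₁def
  have hQ : Q = X 0 * Q₁ := by
    ext m
    rw [coeffXmul]
    by_cases hle : Finsupp.single (0:Fin 3) 1 ≤ m
    · rw [if_pos hle]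
      have hval : coeff (R := k) (m - Finsupp.single 0 1) Q₁ =
          coeff (R := k) ((m - Finsupp.single 0 1) + Finsupp.single 0 1) Q := rfl
      rw [hval, tsub_add_cancel_of_le hle]
    · rw [if_neg hle, hQ0 m (by
        by_contra hm
        exact hle (Finsupp.single_le_iff.mpr (Nat.one_le_iff_ne_zero.mpr hm)))]
  refine ⟨Q₁, ?_⟩
  haveI : IsDomain (MvPowerSeries (Fin 3) k) := NoZeroDivisors.to_isDomain _
  apply mul_left_cancel₀ Xne
  calc X 0 * U = U * X 0 := mul_comm _ _
    _ = Q * (X 0 * X 1 + X 2 ^ 2) := h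
    _ = X 0 * (Q₁ * (X 0 * X 1 + X 2 ^ 2)) := by rw [hQ]; ring

/-- `x̄` is a nonzerodivisor in `A`. -/
lemma xregA (c : A1Ring k) (hc : c * A1x k = 0) : c = 0 := by
  obtain ⟨U, rfl⟩ := Ideal.Quotient.mk_surjective c
  rw [A1x] at hc
  have hc2 : Ideal.Quotient.mk (Ideal.span {(X 0 : MvPowerSeries (Fin 3) k) * X 1 + X 2 ^ 2})
      (U * X 0) = 0 := by rw [map_mul]; exact hc
  have hmem : U * X 0 ∈ Ideal.span {(X 0 : MvPowerSeries (Fin 3) k) * X 1 + X 2 ^ 2} :=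
    (Ideal.Quotient.eq_zero_iff_mem).mp hc2
  obtain ⟨Q, hQ⟩ := Ideal.mem_span_singleton.mp hmem
  obtain ⟨Q₁, hQ₁⟩ := xreg_ps U Q (by rw [hQ]; ring)
  exact (Ideal.Quotient.eq_zero_iff_mem).mpr
    (Ideal.mem_span_singleton.mpr ⟨Q₁, by rw [hQ₁]; ring⟩)

/-- The maximal ideal `(x̄, ȳ, z̄)` of `A` is proper. -/
lemma one_not_mem : (1 : A1Ring k) ∉ Ideal.span {A1x k, A1y k, A1z k} := by
  have hker : ∀ a ∈ Ideal.span {(X 0 : MvPowerSeries (Fin 3) k) * X 1 + X 2 ^ 2},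
      constantCoeff (σ := Fin 3) (R := k) a = 0 := by
    intro a ha
    rw [Ideal.mem_span_singleton] at ha
    obtain ⟨b, rfl⟩ := ha
    simp
  set φ : A1Ring k →+* k :=
    Ideal.Quotient.lift _ (constantCoeff (σ := Fin 3) (R := k)) hker with hφ
  have hφx : φ (A1x k) = 0 := by
    rw [hφ, A1x]; exact (Ideal.Quotient.lift_mk _ _ _).trans (by simp)
  have hφy : φ (A1y k) = 0 := by
    rw [hφ, A1y]; exact (Ideal.Quotient.lift_mk _ _ _).trans (by simp)
  have hφz : φ (A1z k) = 0 := by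
    rw [hφ, A1z]; exact (Ideal.Quotient.lift_mk _ _ _).trans (by simp)
  intro hmem
  have hle : Ideal.span {A1x k, A1y k, A1z k} ≤ RingHom.ker φ := by
    rw [Ideal.span_le]
    rintro t ht
    simp only [Set.mem_insert_iff, Set.mem_singleton_iff] at ht
    rcases ht with rfl | rfl | rfl <;>
      simp [RingHom.mem_ker, hφx, hφy, hφz]
  have h1 : φ 1 = 0 := hle hmem
  rw [map_one] at h1
  exact one_ne_zero h1

/-- A derivation sending the generators into the maximal ideal maps everything into it. -/
lemma deriv_mem (D : Derivation k (A1Ring k) (A1Ring k))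
    (hx : D (A1x k) ∈ Ideal.span {A1x k, A1y k, A1z k})
    (hy : D (A1y k) ∈ Ideal.span {A1x k, A1y k, A1z k})
    (hz : D (A1z k) ∈ Ideal.span {A1x k, A1y k, A1z k})
    (a : A1Ring k) : D a ∈ Ideal.span {A1x k, A1y k, A1z k} := by
  set M := Ideal.span {A1x k, A1y k, A1z k} with hM
  have hxM : A1x k ∈ M := Ideal.subset_span (by simp)
  have hyM : A1y k ∈ M := Ideal.subset_span (by simp)
  have hzM : A1z k ∈ M := Ideal.subset_span (by simp)
  obtain ⟨F, rfl⟩ := Ideal.Quotient.mk_surjective a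
  obtain ⟨c, P, Q, R, hF⟩ := decomp F
  have hdec : @Eq (A1Ring k) (Ideal.Quotient.mk _ F)
      (algebraMap k (A1Ring k) c + A1x k * Ideal.Quotient.mk _ P +
        A1y k * Ideal.Quotient.mk _ Q + A1z k * Ideal.Quotient.mk _ R) := by
    rw [hF]
    simp only [map_add, map_mul]
    rw [c_eq_algebraMap, Ideal.Quotient.mk_algebraMap]
    rfl
  rw [hdec]
  have hmul : ∀ (u v : A1Ring k), u ∈ M → D u ∈ M → D (u * v) ∈ M := by
    intro u v hu hDu
    rw [Derivation.leibniz, smul_eq_mul, smul_eq_mul]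
    exact M.add_mem (Ideal.mul_mem_right (D v) M hu) (Ideal.mul_mem_left M v hDu)
  rw [D.map_add, D.map_add, D.map_add, Derivation.map_algebraMap]
  refine M.add_mem (M.add_mem (M.add_mem ?_ ?_) ?_) ?_
  · simp
  · exact hmul _ _ hxM hx
  · exact hmul _ _ hyM hy
  · exact hmul _ _ hzM hz

end A1Aux

/-- **A vector field of square zero in a basis of the tangent module cannot vanish at an
`A₁` singularity.** In characteristic `2`, with `D₁, D₂` the standard basis of derivations
of `A = k[[x, y, z]]/(xy + z²)` (so `D₁ = x∂ₓ + y∂_y`, `D₂ = ∂_z`), if `f` is a unit and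
`g ∈ 𝔪 = (x̄, ȳ, z̄)`, then `ξ = f·D₁ + g·D₂` satisfies `ξ ∘ ξ ≠ 0`. -/
theorem a1_singularity_square_zero_field_does_not_vanish
    (k : Type*) [Field k] [CharP k 2]
    (D₁ D₂ : Derivation k (A1Ring k) (A1Ring k))
    (h1x : D₁ (A1x k) = A1x k) (h1y : D₁ (A1y k) = A1y k) (h1z : D₁ (A1z k) = 0)
    (h2x : D₂ (A1x k) = 0) (h2y : D₂ (A1y k) = 0) (h2z : D₂ (A1z k) = 1)
    (hindep : ∀ a b : A1Ring k, a • D₁ + b • D₂ = 0 → a = 0 ∧ b = 0)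
    (f g : A1Ring k) (hf : IsUnit f)
    (hg : g ∈ Ideal.span {A1x k, A1y k, A1z k}) :
    ∃ a : A1Ring k, (f • D₁ + g • D₂) ((f • D₁ + g • D₂) a) ≠ 0 := by
  by_contra hcon
  push_neg at hcon
  set M := Ideal.span {A1x k, A1y k, A1z k} with hM
  have hxM : A1x k ∈ M := Ideal.subset_span (by simp)
  have hyM : A1y k ∈ M := Ideal.subset_span (by simp)
  have hD₁ : ∀ a, D₁ a ∈ M :=
    A1Aux.deriv_mem D₁ (by rw [h1x]; exact hxM) (by rw [h1y]; exact hyM)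
      (by rw [h1z]; exact M.zero_mem)
  have hxi : ∀ a, (f • D₁ + g • D₂) a = f * D₁ a + g * D₂ a := fun a => by
    rw [Derivation.add_apply, Derivation.smul_apply, Derivation.smul_apply,
      smul_eq_mul, smul_eq_mul]
  have hx1 : (f • D₁ + g • D₂) (A1x k) = f * A1x k := by
    rw [hxi, h1x, h2x]; ring
  have h2 : ((f • D₁ + g • D₂) f + f * f) * A1x k = 0 := by
    have hc := hcon (A1x k)
    rw [hx1, Derivation.leibniz, smul_eq_mul, smul_eq_mul, hx1] at hc
    linear_combination hc
  have hw0 : (f • D₁ + g • D₂) f + f * f = 0 := A1Aux.xregA _ h2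
  have hwM : (f • D₁ + g • D₂) f ∈ M := by
    rw [hxi]
    exact M.add_mem (Ideal.mul_mem_left M f (hD₁ f)) (Ideal.mul_mem_right (D₂ f) M hg)
  have hff : f * f ∈ M := by
    have hneg : f * f = -((f • D₁ + g • D₂) f) := by linear_combination hw0
    rw [hneg]
    exact M.neg_mem hwM
  have h1M : (1 : A1Ring k) ∈ M :=
    (Ideal.eq_top_iff_one M).mp (Ideal.eq_top_of_isUnit_mem M hff (hf.mul hf))
  exact A1Aux.one_not_mem h1M

end
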